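/- Let (a_n) be defined by a_0 = 4 and, for n ≥ 1, a_n = min{ |d − p_n/d| : d divides p_n and |d − p_n/d| > 1 }, where p_n = a_0·a_1···a_{n−1}, and let (b_n) be defined by b_1 = 1 and b_n = ⌈(1/2)·(b_1 + ... + b_{n−1})⌉ for n ≥ 2. Then for every n ≥ 3, the partial product satisfies p_n = 3·2^{k_n} with k_n = 2 + ∑_{j=1}^{n−1} b_j; in particular p_3 = 48 = 3·2^4. -/

import Mathlib

lemma cof1 {k i : ℕ} (h : i ≤ k) : 3 * 2 ^ k / 2 ^ i = 3 * 2 ^ (k - i) := by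
  have : 3 * 2 ^ k = 2 ^ i * (3 * 2 ^ (k - i)) := by
    rw [mul_left_comm, ← pow_add, Nat.add_sub_cancel' h]
  rw [this, Nat.mul_div_cancel_left _ (by positivity)]

lemma cof2 {k i : ℕ} (h : i ≤ k) : 3 * 2 ^ k / (3 * 2 ^ i) = 2 ^ (k - i) := by
  have : 3 * 2 ^ k = 3 * 2 ^ i * 2 ^ (k - i) := by
    rw [mul_assoc, ← pow_add, Nat.add_sub_cancel' h]
  rw [this, Nat.mul_div_cancel_left _ (by positivity)]

lemma div_struct {k d : ℕ} (h : d ∣ 3 * 2 ^ k) :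
    ∃ i, i ≤ k ∧ (d = 2 ^ i ∨ d = 3 * 2 ^ i) := by
  obtain ⟨d1, d2, h1, h2, rfl⟩ := exists_dvd_and_dvd_of_dvd_mul h
  obtain ⟨i, hi, rfl⟩ := (Nat.dvd_prime_pow Nat.prime_two).mp h2
  rcases (Nat.prime_three.eq_one_or_self_of_dvd d1 h1) with rfl | rfl
  · exact ⟨i, hi, Or.inl (one_mul _)⟩
  · exact ⟨i, hi, Or.inr rfl⟩

lemma pb {s t : ℕ} (h : s ≤ t) : (2:ℤ) ^ s ≤ 2 ^ t :=
  pow_le_pow_right₀ one_le_two h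

lemma ceil_half (S : ℕ) : ⌈(S:ℚ)/2⌉ = (((S+1)/2 : ℕ) : ℤ) := by
  set t : ℕ := (S+1)/2 with ht
  have h1 : S ≤ 2 * t := by omega
  have h2 : 2 * t ≤ S + 1 := by omega
  apply le_antisymm
  · rw [Int.ceil_le]
    push_cast
    rw [div_le_iff₀ (by norm_num)]
    have : (S:ℚ) ≤ 2*t := by exact_mod_cast h1
    linarith
  · rw [Int.le_ceil_iff]
    push_cast
    rw [lt_div_iff₀ (by norm_num)]
    have : (2*t : ℚ) ≤ (S:ℚ) + 1 := by exact_mod_cast h2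
    linarith

lemma key (k : ℕ) (hk : 3 ≤ k) :
    sInf {v : ℕ | ∃ d : ℕ, d ∣ 3 * 2 ^ k ∧ 0 < d ∧ 1 < v ∧
      (v : ℤ) = |(d : ℤ) - ((3 * 2 ^ k / d : ℕ) : ℤ)|} = 2 ^ ((k - 1) / 2) := by
  set e := (k - 1) / 2 with he
  have hpar : k = 2 * e + 1 ∨ k = 2 * e + 2 := by omega
  have he1 : 1 ≤ e := by omega
  have hx : (0:ℤ) < 2 ^ e := by positivity
  have hmem : (2 ^ e : ℕ) ∈ {v : ℕ | ∃ d : ℕ, d ∣ 3 * 2 ^ k ∧ 0 < d ∧ 1 < v ∧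
      (v : ℤ) = |(d : ℤ) - ((3 * 2 ^ k / d : ℕ) : ℤ)|} := by
    refine ⟨3 * 2 ^ e, mul_dvd_mul_left 3 (pow_dvd_pow 2 (by omega)), by positivity,
      Nat.one_lt_two_pow (by omega), ?_⟩
    rw [cof2 (by omega)]
    push_cast
    rcases hpar with hpar | hpar
    · rw [show k - e = e + 1 by omega, pow_succ, abs_of_nonneg (by linarith)]; ring
    · rw [show k - e = e + 2 by omega, pow_add, abs_of_nonpos (by norm_num; linarith)]
      ring
  apply le_antisymm (Nat.sInf_le hmem)
  apply le_csInf ⟨_, hmem⟩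
  rintro v ⟨d, hdvd, hdpos, hv1, hveq⟩
  obtain ⟨i, hik, hcase | hcase⟩ := div_struct hdvd
  · -- d = 2 ^ i, cofactor 3 * 2 ^ (k - i)
    subst hcase
    rw [cof1 hik] at hveq
    push_cast at hveq
    rcases Nat.lt_or_ge (e + 1) i with h1 | h1
    · -- i ≥ e + 2, k - i ≤ e
      have b1 : (2:ℤ) ^ (k - i) ≤ 2 ^ e := pb (by omega)
      have b2 : (2:ℤ) ^ (e + 2) ≤ 2 ^ i := pb (by omega)
      have b3 : (2:ℤ) ^ (e + 2) = 4 * 2 ^ e := by rw [pow_add]; ring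
      have habs : (2:ℤ) ^ i - 3 * 2 ^ (k - i) ≤ |(2:ℤ) ^ i - 3 * 2 ^ (k - i)| :=
        le_abs_self _
      have : (2:ℤ) ^ e ≤ (v:ℤ) := by rw [hveq]; linarith
      exact_mod_cast this
    · -- i ≤ e + 1, k - i ≥ e
      have b1 : (2:ℤ) ^ e ≤ 2 ^ (k - i) := pb (by omega)
      have b2 : (2:ℤ) ^ i ≤ 2 ^ (e + 1) := pb (by omega)
      have b3 : (2:ℤ) ^ (e + 1) = 2 * 2 ^ e := by rw [pow_succ]; ring
      have habs : 3 * (2:ℤ) ^ (k - i) - 2 ^ i ≤ |(2:ℤ) ^ i - 3 * 2 ^ (k - i)| := by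
        rw [abs_sub_comm]; exact le_abs_self _
      have : (2:ℤ) ^ e ≤ (v:ℤ) := by rw [hveq]; linarith
      exact_mod_cast this
  · -- d = 3 * 2 ^ i, cofactor 2 ^ (k - i)
    subst hcase
    rw [cof2 hik] at hveq
    push_cast at hveq
    rcases Nat.lt_or_ge i e with h1 | h1
    · -- i ≤ e - 1, k - i ≥ e + 2
      have b1 : (2:ℤ) ^ i ≤ 2 ^ (e - 1) := pb (by omega)
      have b2 : (2:ℤ) ^ (e + 2) ≤ 2 ^ (k - i) := pb (by omega)
      have b3 : (2:ℤ) ^ (e + 2) = 8 * 2 ^ (e - 1) := by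
        rw [show (8:ℤ) * 2 ^ (e-1) = 2 ^ 3 * 2 ^ (e-1) by norm_num, ← pow_add]
        congr 1; omega
      have b4 : (2:ℤ) ^ e = 2 * 2 ^ (e - 1) := by
        rw [← pow_succ']; congr 1; omega
      have habs : (2:ℤ) ^ (k - i) - 3 * 2 ^ i ≤ |3 * (2:ℤ) ^ i - 2 ^ (k - i)| := by
        rw [abs_sub_comm]; exact le_abs_self _
      have : (2:ℤ) ^ e ≤ (v:ℤ) := by rw [hveq]; linarith
      exact_mod_cast this
    · rcases Nat.lt_or_ge (k - i) (e + 2) with h2 | h2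
      · -- k - i ≤ e + 1
        have b1 : (2:ℤ) ^ (k - i) ≤ 2 ^ (e + 1) := pb (by omega)
        have b2 : (2:ℤ) ^ e ≤ 2 ^ i := pb h1
        have b3 : (2:ℤ) ^ (e + 1) = 2 * 2 ^ e := by rw [pow_succ]; ring
        have habs : 3 * (2:ℤ) ^ i - 2 ^ (k - i) ≤ |3 * (2:ℤ) ^ i - 2 ^ (k - i)| :=
          le_abs_self _
        have : (2:ℤ) ^ e ≤ (v:ℤ) := by rw [hveq]; linarith
        exact_mod_cast this
      · -- i = e and k - i = e + 2
        have hi : i = e := by omega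
        have hj : k - i = e + 2 := by omega
        rw [hj, hi] at hveq
        have b3 : (2:ℤ) ^ (e + 2) = 4 * 2 ^ e := by rw [pow_add]; ring
        have habs : (2:ℤ) ^ (e + 2) - 3 * 2 ^ e ≤ |3 * (2:ℤ) ^ e - 2 ^ (e + 2)| := by
          rw [abs_sub_comm]; exact le_abs_self _
        have : (2:ℤ) ^ e ≤ (v:ℤ) := by rw [hveq]; linarith
        exact_mod_cast this



/-- With `a 0 = 4`, `p n = a 0 ⋯ a (n-1)`,
`a n = min{ |d − p n / d| : d ∣ p n, |d − p n / d| > 1 }` for `n ≥ 1`,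
`b 1 = 1` and `b n = ⌈(b 1 + ⋯ + b (n-1)) / 2⌉` for `n ≥ 2`,
the partial products satisfy `p n = 3 * 2 ^ (2 + ∑_{j=1}^{n-1} b j)` for all
`n ≥ 3`; in particular `p 3 = 48 = 3 * 2 ^ 4`. -/
theorem partial_products_eq_three_mul_two_pow
    (a b p : ℕ → ℕ)
    (hp : ∀ n, p n = ∏ k ∈ Finset.range n, a k)
    (ha0 : a 0 = 4)
    (ha : ∀ n, 1 ≤ n →
      a n = sInf {v : ℕ | ∃ d : ℕ, d ∣ p n ∧ 0 < d ∧ 1 < v ∧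
        (v : ℤ) = |(d : ℤ) - ((p n / d : ℕ) : ℤ)|})
    (hb1 : b 1 = 1)
    (hb : ∀ n, 2 ≤ n →
      (b n : ℤ) = ⌈(∑ k ∈ Finset.Icc 1 (n - 1), (b k : ℚ)) / 2⌉) :
    (∀ n, 3 ≤ n → p n = 3 * 2 ^ (2 + ∑ j ∈ Finset.Icc 1 (n - 1), b j)) ∧
      p 3 = 48 ∧ (48 : ℕ) = 3 * 2 ^ 4 := by
  -- the natural-number form of hb
  have hbnat : ∀ n, 2 ≤ n → b n = ((∑ k ∈ Finset.Icc 1 (n-1), b k) + 1) / 2 := by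
    intro n hn
    have h := hb n hn
    rw [show (∑ k ∈ Finset.Icc 1 (n-1), (b k : ℚ)) = ((∑ k ∈ Finset.Icc 1 (n-1), b k : ℕ) : ℚ)
      by push_cast; rfl, ceil_half] at h
    exact_mod_cast h
  have hb2 : b 2 = 1 := by
    have := hbnat 2 le_rfl
    simpa [hb1] using this
  -- compute p 1 and a 1
  have hp1 : p 1 = 4 := by rw [hp]; simp [ha0]
  have ha1 : a 1 = 3 := by
    rw [ha 1 le_rfl, hp1]
    apply le_antisymm
    · apply Nat.sInf_le
      exact ⟨1, one_dvd _, one_pos, by norm_num, by norm_num⟩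
    · refine le_csInf ⟨3, 1, one_dvd _, one_pos, by norm_num, by norm_num⟩ ?_
      rintro v ⟨d, hd, hdp, hv, hveq⟩
      have hdle : d ≤ 4 := Nat.le_of_dvd (by norm_num) hd
      interval_cases d <;> (try norm_num at hveq hd ⊢) <;> omega
  have hp2 : p 2 = 12 := by
    rw [hp, Finset.prod_range_succ, Finset.prod_range_one, ha0, ha1]
    norm_num
  have ha2 : a 2 = 4 := by
    rw [ha 2 (by norm_num), hp2]
    apply le_antisymm
    · apply Nat.sInf_le
      exact ⟨2, by norm_num, by norm_num, by norm_num, by norm_num⟩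
    · refine le_csInf ⟨4, 2, by norm_num, by norm_num, by norm_num, by norm_num⟩ ?_
      rintro v ⟨d, hd, hdp, hv, hveq⟩
      have hdle : d ≤ 12 := Nat.le_of_dvd (by norm_num) hd
      interval_cases d <;> (try norm_num at hveq hd ⊢) <;> omega
  have hp3 : p 3 = 48 := by
    rw [hp, Finset.prod_range_succ, Finset.prod_range_succ, Finset.prod_range_one,
      ha0, ha1, ha2]
    norm_num
  refine ⟨?_, hp3, by norm_num⟩
  intro n hn
  induction n, hn using Nat.le_induction with
  | base =>
    rw [hp3, show Finset.Icc 1 (3-1) = {1, 2} by decide]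
    simp [hb1, hb2]
  | succ n hn ih =>
    set S := ∑ j ∈ Finset.Icc 1 (n-1), b j with hS
    have hS1 : 1 ≤ S := by
      rw [hS]
      calc 1 = b 1 := hb1.symm
        _ ≤ S := Finset.single_le_sum (fun i _ => Nat.zero_le _)
            (Finset.mem_Icc.mpr ⟨le_rfl, by omega⟩)
    have hk3 : 3 ≤ 2 + S := by omega
    have han : a n = 2 ^ ((2 + S - 1) / 2) := by
      rw [ha n (by omega), ih]
      exact key (2 + S) hk3
    have hbn : b n = (S + 1) / 2 := hbnat n (by omega)
    have hexp : (2 + S - 1) / 2 = b n := by omega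
    have hsum : ∑ j ∈ Finset.Icc 1 ((n+1)-1), b j = S + b n := by
      rw [Nat.add_sub_cancel, show n = (n-1)+1 by omega,
        Finset.sum_Icc_succ_top (by omega : 1 ≤ (n-1)+1)]
    rw [hp, Finset.prod_range_succ, ← hp, ih, han, hexp, hsum, mul_assoc, ← pow_add]
    ring_nf
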